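/- arXiv:2509.17871 — 2 statements merged into one kernel-verified Lean document; each statement's English description precedes it below -/
import Mathlib

section
/- Let (Ω, 𝒫) be a probability space, S a real random variable, and Z a real random variable independent of S with probability density f : ℝ → ℝ≥0 (so ∫ f = 1). Fix w > 0 and a threshold T ∈ ℝ. Define the corrected-noised-tally outcomes O_yes = (𝟙{S + w > T}, S + w + Z) and O_no = (𝟙{S > T}, S + Z), and the pivotality Δ = Pr[S + w > T] − Pr[S > T] (which satisfies 0 ≤ Δ ≤ 1). Then for every measurable g : {0,1} × ℝ → {0,1}, E[g(O_yes)] − E[g(O_no)] ≤ Δ + (1 − Δ)·∫_ℝ max(f(u − w) − f(u), 0) du. -/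
open MeasureTheory

private lemma int_of_bdd {α : Type*} [MeasurableSpace α] (μ : Measure α) [IsFiniteMeasure μ]
    {h : α → ℝ} (hm : Measurable h) (h0 : ∀ x, 0 ≤ h x) (h1 : ∀ x, h x ≤ 1) :
    Integrable h μ := by
  refine Integrable.mono' (integrable_const 1) hm.aestronglyMeasurable ?_
  filter_upwards with x
  rw [Real.norm_eq_abs, abs_of_nonneg (h0 x)]
  exact h1 x

/-- Bound on the bribe margin of any bribery condition function under the
corrected noised tally: for any measurable 0/1-valued `g` on the outcome
`(winner, noised yes-weight)`,
`E[g(O_yes)] − E[g(O_no)] ≤ Δ + (1 − Δ)·∫ max (f (u − w) − f u) 0 du`. -/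
theorem corrected_noised_tally_bribe_margin_bound
    {Ω : Type*} [MeasurableSpace Ω] (μ : Measure Ω) [IsProbabilityMeasure μ]
    (S Z : Ω → ℝ) (hS : Measurable S) (hZ : Measurable Z)
    (hindep : ProbabilityTheory.IndepFun S Z μ)
    (f : ℝ → ℝ) (hfmeas : Measurable f) (hf0 : ∀ u, 0 ≤ f u)
    (hf1 : ∫ u, f u = 1)
    (hdens : Measure.map Z μ =
      volume.withDensity (fun u => ENNReal.ofReal (f u)))
    (w T : ℝ) (hw : 0 < w)
    (g : Bool × ℝ → ℝ) (hg : Measurable g) (hg01 : ∀ x, g x = 0 ∨ g x = 1) :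
    (∫ ω, g (decide (T < S ω + w), S ω + w + Z ω) ∂μ)
      - (∫ ω, g (decide (T < S ω), S ω + Z ω) ∂μ)
    ≤ ((μ {ω | T < S ω + w}).toReal - (μ {ω | T < S ω}).toReal)
      + (1 - ((μ {ω | T < S ω + w}).toReal - (μ {ω | T < S ω}).toReal))
        * ∫ u, max (f (u - w) - f u) 0 := by
  classical
  -- basic facts about g
  have hg0 : ∀ x, 0 ≤ g x := fun x => by rcases hg01 x with h | h <;> rw [h] <;> norm_num
  have hg1 : ∀ x, g x ≤ 1 := fun x => by rcases hg01 x with h | h <;> rw [h] <;> norm_num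
  -- f is integrable
  have hfint : Integrable f := by
    by_contra h
    rw [integral_undef h] at hf1
    exact one_ne_zero hf1.symm
  set M : ℝ := ∫ u, max (f (u - w) - f u) 0 with hM
  have hmaxmeas : Measurable (fun u => max (f (u - w) - f u) 0) :=
    ((hfmeas.comp (measurable_id.sub_const w)).sub hfmeas).max measurable_const
  have hMint : Integrable (fun u => max (f (u - w) - f u) 0) := by
    refine Integrable.mono' (hfint.comp_sub_right w) hmaxmeas.aestronglyMeasurable ?_
    filter_upwards with u
    rw [Real.norm_eq_abs, abs_of_nonneg (le_max_right _ _)]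
    rcases max_cases (f (u - w) - f u) 0 with ⟨h1, _⟩ | ⟨h1, _⟩
    · rw [h1]; linarith [hf0 u]
    · rw [h1]; exact hf0 _
  have hM0 : 0 ≤ M := integral_nonneg fun u => le_max_right _ _
  -- decide is measurable
  have hb : Measurable (fun s : ℝ => decide (T < s)) := by
    refine measurable_to_countable' fun b => ?_
    cases b
    · have : (fun s : ℝ => decide (T < s)) ⁻¹' {false} = Set.Iic T := by
        ext s; simp [not_lt]
      rw [this]; exact measurableSet_Iic
    · have : (fun s : ℝ => decide (T < s)) ⁻¹' {true} = Set.Ioi T := by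
        ext s; simp
      rw [this]; exact measurableSet_Ioi
  -- measures
  set ν : Measure ℝ := μ.map S with hν
  set ζ : Measure ℝ := μ.map Z with hζ
  have hνP : IsProbabilityMeasure ν := Measure.isProbabilityMeasure_map hS.aemeasurable
  have hζP : IsProbabilityMeasure ζ := Measure.isProbabilityMeasure_map hZ.aemeasurable
  -- joint law
  have hmap : μ.map (fun ω => (S ω, Z ω)) = ν.prod ζ :=
    (ProbabilityTheory.indepFun_iff_map_prod_eq_prod_map_map hS.aemeasurable
      hZ.aemeasurable).mp hindep
  -- the two integrands as functions on ℝ × ℝ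
  set Fy : ℝ × ℝ → ℝ := fun p => g (decide (T < p.1 + w), p.1 + w + p.2) with hFy
  set Fn : ℝ × ℝ → ℝ := fun p => g (decide (T < p.1), p.1 + p.2) with hFn
  have hFym : Measurable Fy := by
    refine hg.comp (Measurable.prodMk ?_ ?_)
    · exact hb.comp (measurable_fst.add_const w)
    · exact (measurable_fst.add_const w).add measurable_snd
  have hFnm : Measurable Fn := by
    refine hg.comp (Measurable.prodMk ?_ ?_)
    · exact hb.comp measurable_fst
    · exact measurable_fst.add measurable_snd
  have hFyint : Integrable Fy (ν.prod ζ) :=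
    int_of_bdd _ hFym (fun p => hg0 _) (fun p => hg1 _)
  have hFnint : Integrable Fn (ν.prod ζ) :=
    int_of_bdd _ hFnm (fun p => hg0 _) (fun p => hg1 _)
  -- rewrite the integrals over μ as integrals over ν.prod ζ
  have hpairm : Measurable (fun ω => (S ω, Z ω)) := hS.prodMk hZ
  have eq_y : (∫ ω, g (decide (T < S ω + w), S ω + w + Z ω) ∂μ)
      = ∫ p, Fy p ∂(ν.prod ζ) := by
    rw [← hmap, integral_map hpairm.aemeasurable]
    rw [hmap]; exact hFym.aestronglyMeasurable
  have eq_n : (∫ ω, g (decide (T < S ω), S ω + Z ω) ∂μ)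
      = ∫ p, Fn p ∂(ν.prod ζ) := by
    rw [← hmap, integral_map hpairm.aemeasurable]
    rw [hmap]; exact hFnm.aestronglyMeasurable
  -- Fubini
  have fub_y : ∫ p, Fy p ∂(ν.prod ζ) = ∫ s, ∫ z, Fy (s, z) ∂ζ ∂ν :=
    integral_prod Fy hFyint
  have fub_n : ∫ p, Fn p ∂(ν.prod ζ) = ∫ s, ∫ z, Fn (s, z) ∂ζ ∂ν :=
    integral_prod Fn hFnint
  -- integrals over ζ as weighted Lebesgue integrals
  have hζrw : ∀ (h : ℝ → ℝ), Measurable h → ∫ z, h z ∂ζ = ∫ z, f z * h z := by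
    intro h hm
    have hnn : Measurable (fun u => (f u).toNNReal) := hfmeas.real_toNNReal
    have hdd : ζ = volume.withDensity (fun u => ((f u).toNNReal : ENNReal)) := hdens
    rw [hdd, integral_withDensity_eq_integral_smul hnn h]
    congr 1
    funext z
    rw [NNReal.smul_def, Real.coe_toNNReal _ (hf0 z), smul_eq_mul]
  -- integrability of slices
  have hslice : ∀ (b : Bool) (c : ℝ), Integrable (fun u => f (u - c) * g (b, u)) := by
    intro b c
    have hgm : Measurable fun u : ℝ => g (b, u) :=
      hg.comp (measurable_const.prodMk measurable_id)
    refine Integrable.mono' (hfint.comp_sub_right c)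
      (((hfmeas.comp (measurable_id.sub_const c)).mul hgm).aestronglyMeasurable) ?_
    filter_upwards with u
    rw [Real.norm_eq_abs, abs_of_nonneg (mul_nonneg (hf0 _) (hg0 _))]
    calc f (u - c) * g (b, u) ≤ f (u - c) * 1 :=
          mul_le_mul_of_nonneg_left (hg1 _) (hf0 _)
      _ = f (u - c) := mul_one _
  -- change of variables for slices
  have hcv : ∀ (b : Bool) (c : ℝ), ∫ z, f z * g (b, c + z) = ∫ u, f (u - c) * g (b, u) := by
    intro b c
    have := integral_sub_right_eq_self (μ := volume) (fun x => f x * g (b, c + x)) c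
    rw [← this]
    congr 1
    funext u
    have : c + (u - c) = u := by ring
    rw [this]
  -- the pointwise (in s) bound
  set ψ : ℝ → ℝ := fun s => (Set.Ioc (T - w) T).indicator (fun _ => 1 - M) s + M with hψ
  have hpoint : ∀ s : ℝ, (∫ z, Fy (s, z) ∂ζ) - (∫ z, Fn (s, z) ∂ζ) ≤ ψ s := by
    intro s
    have hym : Measurable fun z : ℝ => Fy (s, z) :=
      hFym.comp (measurable_const.prodMk measurable_id)
    have hnm : Measurable fun z : ℝ => Fn (s, z) :=
      hFnm.comp (measurable_const.prodMk measurable_id)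
    rw [hζrw _ hym, hζrw _ hnm]
    by_cases hs : s ∈ Set.Ioc (T - w) T
    · -- pivotal region: bound by 1
      have hψs : ψ s = 1 := by
        rw [hψ]; simp only [Set.indicator_of_mem hs]; ring
      rw [hψs]
      have h1 : (∫ z, f z * Fy (s, z)) ≤ ∫ z, f z := by
        refine integral_mono ?_ hfint ?_
        · refine Integrable.mono' hfint ((hfmeas.mul hym).aestronglyMeasurable) ?_
          filter_upwards with z
          rw [Real.norm_eq_abs, abs_of_nonneg (mul_nonneg (hf0 _) (hg0 _))]
          calc f z * Fy (s, z) ≤ f z * 1 := mul_le_mul_of_nonneg_left (hg1 _) (hf0 _)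
            _ = f z := mul_one _
        · intro z
          calc f z * Fy (s, z) ≤ f z * 1 := mul_le_mul_of_nonneg_left (hg1 _) (hf0 _)
            _ = f z := mul_one _
      have h2 : (0:ℝ) ≤ ∫ z, f z * Fn (s, z) :=
        integral_nonneg fun z => mul_nonneg (hf0 _) (hg0 _)
      rw [hf1] at h1
      linarith
    · -- non-pivotal region: both winners agree
      have hψs : ψ s = M := by
        rw [hψ]; simp only [Set.indicator_of_notMem hs]; ring
      rw [hψs]
      have hcc : decide (T < s + w) = decide (T < s) := by
        simp only [Set.mem_Ioc, not_and_or, not_lt, not_le] at hs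
        rcases hs with h | h
        · have h1 : ¬ T < s + w := by linarith
          have h2 : ¬ T < s := by linarith
          simp [h1, h2]
        · have h1 : T < s + w := by linarith
          simp [h1, h]
      set b : Bool := decide (T < s) with hbb
      have ey : (∫ z, f z * Fy (s, z)) = ∫ u, f (u - (s + w)) * g (b, u) := by
        rw [← hcv b (s + w)]
        congr 1
        funext z
        simp only [hFy]
        rw [hcc]
      have en : (∫ z, f z * Fn (s, z)) = ∫ u, f (u - s) * g (b, u) := by
        rw [← hcv b s]
      rw [ey, en, ← integral_sub (hslice b (s + w)) (hslice b s)]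
      have keyle : ∀ u : ℝ, f (u - (s + w)) * g (b, u) - f (u - s) * g (b, u)
          ≤ max (f (u - s - w) - f (u - s)) 0 := by
        intro u
        have huw : u - (s + w) = u - s - w := by ring
        rw [huw, ← sub_mul]
        rcases le_or_gt (f (u - s - w) - f (u - s)) 0 with h | h
        · exact le_trans (mul_nonpos_of_nonpos_of_nonneg h (hg0 _)) (le_max_right _ _)
        · calc (f (u - s - w) - f (u - s)) * g (b, u)
              ≤ (f (u - s - w) - f (u - s)) * 1 :=
                mul_le_mul_of_nonneg_left (hg1 _) h.le
            _ = f (u - s - w) - f (u - s) := mul_one _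
            _ ≤ max (f (u - s - w) - f (u - s)) 0 := le_max_left _ _
      have hMint' : Integrable (fun u => max (f (u - s - w) - f (u - s)) 0) :=
        hMint.comp_sub_right s
      calc (∫ u, f (u - (s + w)) * g (b, u) - f (u - s) * g (b, u))
          ≤ ∫ u, max (f (u - s - w) - f (u - s)) 0 :=
            integral_mono ((hslice b (s + w)).sub (hslice b s)) hMint' keyle
        _ = M := by
            rw [hM]
            exact integral_sub_right_eq_self (μ := volume) (fun v => max (f (v - w) - f v) 0) s
  -- integrate the pointwise bound
  have hψint : Integrable ψ ν := by
    refine Integrable.add ?_ (integrable_const M)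
    exact (integrable_const (1 - M)).indicator measurableSet_Ioc
  have hφyint : Integrable (fun s => ∫ z, Fy (s, z) ∂ζ) ν := hFyint.integral_prod_left
  have hφnint : Integrable (fun s => ∫ z, Fn (s, z) ∂ζ) ν := hFnint.integral_prod_left
  have hmain : (∫ ω, g (decide (T < S ω + w), S ω + w + Z ω) ∂μ)
      - (∫ ω, g (decide (T < S ω), S ω + Z ω) ∂μ) ≤ ∫ s, ψ s ∂ν := by
    rw [eq_y, eq_n, fub_y, fub_n, ← integral_sub hφyint hφnint]
    exact integral_mono (hφyint.sub hφnint) hψint hpoint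
  -- compute ∫ ψ dν
  set Δ : ℝ := (ν (Set.Ioc (T - w) T)).toReal with hΔ
  have hψval : ∫ s, ψ s ∂ν = Δ + (1 - Δ) * M := by
    rw [hψ, integral_add ((integrable_const (1 - M)).indicator measurableSet_Ioc)
      (integrable_const M)]
    rw [integral_indicator_const _ measurableSet_Ioc, integral_const]
    simp only [probReal_univ, ENNReal.toReal_one, smul_eq_mul, one_mul]
    rw [measureReal_def, ← hΔ]
    ring
  -- identify Δ with the difference of probabilities
  have hMy : μ {ω | T < S ω + w} = ν (Set.Ioi (T - w)) := by
    rw [hν, Measure.map_apply hS measurableSet_Ioi]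
    congr 1
    ext ω
    simp only [Set.mem_setOf_eq, Set.mem_preimage, Set.mem_Ioi]
    constructor <;> intro h <;> linarith
  have hMn : μ {ω | T < S ω} = ν (Set.Ioi T) := by
    rw [hν, Measure.map_apply hS measurableSet_Ioi]
    rfl
  have hsplit : ν (Set.Ioi (T - w)) = ν (Set.Ioc (T - w) T) + ν (Set.Ioi T) := by
    rw [← Set.Ioc_union_Ioi_eq_Ioi (by linarith : T - w ≤ T)]
    exact measure_union (Set.Ioc_disjoint_Ioi le_rfl) measurableSet_Ioi
  have hΔeq : (μ {ω | T < S ω + w}).toReal - (μ {ω | T < S ω}).toReal = Δ := by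
    rw [hMy, hMn, hsplit, ENNReal.toReal_add (measure_ne_top _ _) (measure_ne_top _ _), hΔ]
    ring
  rw [hΔeq]
  calc _ ≤ ∫ s, ψ s ∂ν := hmain
    _ = Δ + (1 - Δ) * M := hψval
end

section
/- For b > 0 let f_b : ℝ → ℝ be the Laplace density f_b(y) = (1/(2b))·exp(−|y|/b). Then for every w ∈ ℝ, ∫_ℝ max(f_b(u − w) − f_b(u), 0) du ≤ 1 − exp(−|w|/b). -/
open MeasureTheory Real Set

lemma lap_integrableOn_Ioi (b : ℝ) (hb : 0 < b) :
    IntegrableOn (fun u : ℝ => Real.exp (-|u| / b)) (Ioi 0) := by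
  have h := exp_neg_integrableOn_Ioi 0 (show (0:ℝ) < b⁻¹ from inv_pos.mpr hb)
  refine h.congr_fun (fun x hx => ?_) measurableSet_Ioi
  rw [abs_of_pos (mem_Ioi.mp hx)]
  congr 1; ring

lemma lap_integrable (b : ℝ) (hb : 0 < b) :
    Integrable (fun u : ℝ => Real.exp (-|u| / b)) := by
  have h1 := lap_integrableOn_Ioi b hb
  have h2 : IntegrableOn (fun u : ℝ => Real.exp (-|u| / b)) (Iic 0) := by
    rw [← Measure.map_neg_eq_self (volume : Measure ℝ)]
    have m : MeasurableEmbedding fun x : ℝ => -x := (Homeomorph.neg ℝ).measurableEmbedding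
    rw [m.integrableOn_map_iff]
    simp_rw [Function.comp_def, abs_neg, neg_preimage, neg_Iic, neg_zero]
    exact (integrableOn_Ici_iff_integrableOn_Ioi).mpr h1
  have := h2.union h1
  rwa [Iic_union_Ioi, integrableOn_univ] at this

lemma lap_integral (b : ℝ) (hb : 0 < b) :
    ∫ u : ℝ, (1 / (2 * b)) * Real.exp (-|u| / b) = 1 := by
  rw [integral_const_mul]
  have habs : ∫ u : ℝ, Real.exp (-|u| / b) = 2 * ∫ u in Ioi (0:ℝ), Real.exp (-u / b) :=
    integral_comp_abs (f := fun x => Real.exp (-x / b))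
  have hcomp : ∫ u in Ioi (0:ℝ), Real.exp (-u / b) = b := by
    have h := integral_comp_mul_left_Ioi (fun y => Real.exp (-y)) 0
      (show (0:ℝ) < b⁻¹ from inv_pos.mpr hb)
    simp only [mul_zero, integral_exp_neg_Ioi_zero, inv_inv, smul_eq_mul, mul_one] at h
    rw [show (∫ u in Ioi (0:ℝ), Real.exp (-u / b)) = ∫ x in Ioi (0:ℝ), Real.exp (-(b⁻¹ * x)) from
      setIntegral_congr_fun measurableSet_Ioi (fun x _ => by congr 1; ring), h]
  rw [habs, hcomp]
  field_simp

/-- Bound on the maximal bribe margin for Laplace noise of scale `b`: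
`∫ max (f_b (u − w) − f_b u) 0 du ≤ 1 − e^{−|w|/b}`. -/
theorem laplace_max_advantage_bound
    (b : ℝ) (hb : 0 < b) (w : ℝ) :
    ∫ u : ℝ, max ((1 / (2 * b)) * Real.exp (-|u - w| / b)
        - (1 / (2 * b)) * Real.exp (-|u| / b)) 0
      ≤ 1 - Real.exp (-|w| / b) := by
  set c := Real.exp (-|w| / b) with hc
  have hc1 : c ≤ 1 := by
    rw [hc]
    apply Real.exp_le_one_iff.mpr
    apply div_nonpos_of_nonpos_of_nonneg (neg_nonpos.mpr (abs_nonneg w)) hb.le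
  have hcb : (0:ℝ) < 1 / (2 * b) := by positivity
  have hint : Integrable (fun u : ℝ => (1 - c) * ((1 / (2 * b)) * Real.exp (-|u - w| / b))) :=
    (((lap_integrable b hb).comp_sub_right w).const_mul _).const_mul _
  have hptwise : ∀ u : ℝ,
      max ((1 / (2 * b)) * Real.exp (-|u - w| / b) - (1 / (2 * b)) * Real.exp (-|u| / b)) 0
        ≤ (1 - c) * ((1 / (2 * b)) * Real.exp (-|u - w| / b)) := by
    intro u
    apply max_le
    · have key : c * ((1 / (2 * b)) * Real.exp (-|u - w| / b))
          ≤ (1 / (2 * b)) * Real.exp (-|u| / b) := by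
        rw [hc, ← mul_assoc, mul_comm (Real.exp _) _, mul_assoc, ← Real.exp_add]
        apply mul_le_mul_of_nonneg_left _ hcb.le
        apply Real.exp_le_exp.mpr
        rw [← add_div, div_le_div_iff_of_pos_right hb]
        have := abs_sub_abs_le_abs_sub u (u - w)
        simp only [sub_sub_cancel] at this
        linarith [abs_sub_abs_le_abs_sub u (u - w)]
      nlinarith [key]
    · exact mul_nonneg (by linarith) (by positivity)
  calc ∫ u : ℝ, max ((1 / (2 * b)) * Real.exp (-|u - w| / b)
        - (1 / (2 * b)) * Real.exp (-|u| / b)) 0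
      ≤ ∫ u : ℝ, (1 - c) * ((1 / (2 * b)) * Real.exp (-|u - w| / b)) := by
        apply integral_mono_of_nonneg
        · exact Filter.Eventually.of_forall fun u => le_max_right _ _
        · exact hint
        · exact Filter.Eventually.of_forall hptwise
    _ = (1 - c) * ∫ u : ℝ, (1 / (2 * b)) * Real.exp (-|u - w| / b) := integral_const_mul _ _
    _ = (1 - c) * 1 := by
        rw [show (∫ u : ℝ, (1 / (2 * b)) * Real.exp (-|u - w| / b))
            = ∫ u : ℝ, (1 / (2 * b)) * Real.exp (-|u| / b) from
          integral_sub_right_eq_self (fun u => (1 / (2 * b)) * Real.exp (-|u| / b)) w,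
          lap_integral b hb]
    _ = 1 - c := mul_one _
end
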